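/- In volume pricing, scaling the offloading ratio κ by ρ ∈ (0,1) (κ_new = ρκ) and the price by 1/ρ (p_new = p/ρ) leaves every user's net-utility function, and hence every user's optimal traffic x⋆, unchanged, while the 3G traffic scales by ρ: ∑_t y_new(t) = ρ ∑_t y(t). Consequently R(p_new, κ_new) = (p − ρη) ∑_t Y(t; p, κ) > (p − η) ∑_t Y(t; p, κ) = R(p, κ) whenever R(p,κ) > 0 and η > 0. -/

import Mathlib

/-- Volume-pricing scaling argument: replacing (p, κ) by (p/ρ, ρκ) with
ρ ∈ (0,1) leaves every user's net-utility (hence optimal traffic) unchanged,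
scales the 3G traffic by ρ, and strictly increases the revenue whenever the
original revenue is positive and η > 0. -/
theorem volume_pricing_offloading_increases_revenue
    (θ p κ η ρ : ℝ) (hθ0 : 0 < θ) (hθ1 : θ < 1)
    (hρ0 : 0 < ρ) (hρ1 : ρ < 1) (hκ : 0 < κ) (hp : 0 < p) (hη : 0 < η) :
    (∀ (T : Finset ℕ) (w x : ℕ → ℝ),
      (∑ t ∈ T, (w t) ^ (1 - θ) * (x t) ^ θ) - (p / ρ) * (ρ * κ) * ∑ t ∈ T, x t
        = (∑ t ∈ T, (w t) ^ (1 - θ) * (x t) ^ θ) - p * κ * ∑ t ∈ T, x t) ∧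
    (∀ (T : Finset ℕ) (x : ℕ → ℝ),
      (ρ * κ) * ∑ t ∈ T, x t = ρ * (κ * ∑ t ∈ T, x t)) ∧
    (∀ S : ℝ, 0 < S → (p - η) * S > 0 →
      (p / ρ - η) * (ρ * S) = (p - ρ * η) * S ∧
      (p - η) * S < (p / ρ - η) * (ρ * S)) := by
  refine ⟨fun T w x => ?_, fun T x => by ring, fun S hS hR => ?_⟩
  · have : (p / ρ) * (ρ * κ) = p * κ := by
      field_simp
    rw [this]
  · have heq : (p / ρ - η) * (ρ * S) = (p - ρ * η) * S := by
      field_simp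
    refine ⟨heq, ?_⟩
    rw [heq]
    have : ρ * η < η := by nlinarith
    nlinarith
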